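/- Let P1, P2, P3 : ℝ → ℝ be differentiable solutions of the system P1' = -((γ+1)/4)P1² + (1/4)P1P2 - ((3-γ)/4)P1P3 - (1/4)P2P3, P2' = -((γ+1)/4)P2(P1+P3), P3' = -((γ+1)/4)P3² + (1/4)P1P2 - ((3-γ)/4)P1P3 - (1/4)P2P3. If at some time t₀ one has P2(t₀) = K·(P1(t₀) - P3(t₀)) for a constant K, then P2(t) = K·(P1(t) - P3(t)) for all t (assuming the solutions are defined on an interval containing t₀). -/

import Mathlib

open Set Real

/-- Forward Gronwall: linear ODE with zero initial condition stays zero. -/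
lemma linODE_zero_fwd (a f : ℝ → ℝ) (s t : ℝ) (hst : s ≤ t)
    (ha : ContinuousOn a (Icc s t))
    (hf : ∀ x ∈ Icc s t, HasDerivAt f (a x * f x) x) (h0 : f s = 0) :
    ∀ x ∈ Icc s t, f x = 0 := by
  obtain ⟨C, hC⟩ : ∃ C, ∀ x ∈ Icc s t, |a x| ≤ C := by
    obtain ⟨C, hC⟩ := (isCompact_Icc.image_of_continuousOn ha.norm).bddAbove
    exact ⟨C, fun x hx => hC ⟨x, hx, rfl⟩⟩
  have hcont : ContinuousOn f (Icc s t) := fun x hx => ((hf x hx).continuousAt).continuousWithinAt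
  have key := norm_le_gronwallBound_of_norm_deriv_right_le (f := f) (f' := fun x => a x * f x)
    (δ := 0) (K := C) (ε := 0) (a := s) (b := t) hcont
    (fun x hx => ((hf x (Ico_subset_Icc_self hx)).hasDerivWithinAt))
    (by simp [h0])
    (fun x hx => by
      have := hC x (Ico_subset_Icc_self hx)
      calc ‖a x * f x‖ = |a x| * ‖f x‖ := by rw [Real.norm_eq_abs, abs_mul]; rfl
        _ ≤ C * ‖f x‖ := by
            exact mul_le_mul_of_nonneg_right this (norm_nonneg _)
        _ = C * ‖f x‖ + 0 := by ring)
  intro x hx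
  have := key x hx
  rw [gronwallBound_ε0_δ0] at this
  exact norm_le_zero_iff.mp this

/-- Two-sided version on an OrdConnected set. -/
lemma linODE_zero (a f : ℝ → ℝ) (I : Set ℝ) (hI : I.OrdConnected) (t₀ : ℝ) (ht₀ : t₀ ∈ I)
    (ha : ContinuousOn a I)
    (hf : ∀ x ∈ I, HasDerivAt f (a x * f x) x) (h0 : f t₀ = 0) :
    ∀ t ∈ I, f t = 0 := by
  intro t ht
  rcases le_total t₀ t with h | h
  · have hsub : Icc t₀ t ⊆ I := hI.out ht₀ ht
    exact linODE_zero_fwd a f t₀ t h (ha.mono hsub) (fun x hx => hf x (hsub hx)) h0 t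
      ⟨h, le_rfl⟩
  · have hsub : Icc t t₀ ⊆ I := hI.out ht ht₀
    have := linODE_zero_fwd (fun x => -a (-x)) (fun x => f (-x)) (-t₀) (-t)
      (neg_le_neg h)
      (by
        have : ContinuousOn (fun x : ℝ => a (-x)) (Icc (-t₀) (-t)) := by
          apply (ha.mono hsub).comp continuousOn_neg
          intro x hx
          simp only [mem_Icc] at hx ⊢; constructor <;> linarith
        exact this.neg)
      (fun x hx => by
        have hmem : -x ∈ Icc t t₀ := by simp only [mem_Icc] at hx ⊢; constructor <;> linarith
        have := (hf (-x) (hsub hmem)).comp x (hasDerivAt_neg x)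
        simpa [Function.comp_def, mul_comm, mul_assoc, mul_left_comm, neg_mul, mul_neg] using this)
      (by simpa using h0) (-t) ⟨neg_le_neg h, le_rfl⟩
    simpa using this

theorem P2_eq_K_mul_P1_sub_P3 (γ K : ℝ) (P1 P2 P3 : ℝ → ℝ) (I : Set ℝ)
    (hI : I.OrdConnected) (t₀ : ℝ) (ht₀ : t₀ ∈ I)
    (h1 : ∀ t ∈ I, HasDerivAt P1
      (-((γ+1)/4) * (P1 t)^2 + (1/4) * P1 t * P2 t - ((3-γ)/4) * P1 t * P3 t
        - (1/4) * P2 t * P3 t) t)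
    (h2 : ∀ t ∈ I, HasDerivAt P2 (-((γ+1)/4) * P2 t * (P1 t + P3 t)) t)
    (h3 : ∀ t ∈ I, HasDerivAt P3
      (-((γ+1)/4) * (P3 t)^2 + (1/4) * P1 t * P2 t - ((3-γ)/4) * P1 t * P3 t
        - (1/4) * P2 t * P3 t) t)
    (hinit : P2 t₀ = K * (P1 t₀ - P3 t₀)) :
    ∀ t ∈ I, P2 t = K * (P1 t - P3 t) := by
  set a : ℝ → ℝ := fun t => -((γ+1)/4) * (P1 t + P3 t) with ha_def
  set y : ℝ → ℝ := fun t => P2 t - K * (P1 t - P3 t) with hy_def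
  have ha : ContinuousOn a I := by
    intro x hx
    exact (((h1 x hx).continuousAt.add (h3 x hx).continuousAt).const_smul
      (-((γ+1)/4) : ℝ)).continuousWithinAt
  have hy : ∀ x ∈ I, HasDerivAt y (a x * y x) x := by
    intro x hx
    have : HasDerivAt y _ x := (h2 x hx).sub (((h1 x hx).sub (h3 x hx)).const_mul K)
    convert this using 1
    simp only [ha_def, hy_def]
    ring
  have h0 : y t₀ = 0 := by simp [hy_def, hinit]
  have := linODE_zero a y I hI t₀ ht₀ ha hy h0
  intro t ht
  have := this t ht
  simp only [hy_def] at this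
  linarith
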